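/- For the hyperoctahedron H^n, the B-type identity ν⁺_k − ν⁻_k = (2n − 3k)·Id − σ_k holds on the face module M^n_k, where ν⁺_k = ∂_{k+1}∘ε_k, ν⁻_k = ε_{k−1}∘∂_k, and σ_k is the 'flip one vertex' map. -/

import Mathlib

open Finset

/-- A face of the hyperoctahedron on `2n` paired vertices `(i, b)`,
where `(i, true) = αᵢ` and `(i, false) = ᾱᵢ`. -/
def IsFace {n : ℕ} (x : Finset (Fin n × Bool)) : Prop :=
  ∀ p ∈ x, ∀ q ∈ x, p.1 = q.1 → p.2 = q.2

instance {n : ℕ} (x : Finset (Fin n × Bool)) : Decidable (IsFace x) := by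
  unfold IsFace; infer_instance

/-- The opposite vertex. -/
def oppv {n : ℕ} (p : Fin n × Bool) : Fin n × Bool := (p.1, !p.2)

/-- Coboundary `ε(x) = Σ { y a face : x ⊆ y, |y| = |x| + 1 }` on the module of
formal `F`-linear combinations of subsets of the vertex set. -/
noncomputable def eps (F : Type*) [CommRing F] (n : ℕ) :
    (Finset (Fin n × Bool) →₀ F) →ₗ[F] (Finset (Fin n × Bool) →₀ F) :=
  Finsupp.lsum F fun x => LinearMap.toSpanSingleton F _
    (∑ y ∈ Finset.univ.filter
        (fun y : Finset (Fin n × Bool) => IsFace y ∧ x ⊆ y ∧ y.card = x.card + 1),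
      Finsupp.single y (1 : F))

/-- Boundary `∂(x) = Σ { z : z ⊆ x, |z| + 1 = |x| }`. -/
noncomputable def bnd (F : Type*) [CommRing F] (n : ℕ) :
    (Finset (Fin n × Bool) →₀ F) →ₗ[F] (Finset (Fin n × Bool) →₀ F) :=
  Finsupp.lsum F fun x => LinearMap.toSpanSingleton F _
    (∑ z ∈ Finset.univ.filter
        (fun z : Finset (Fin n × Bool) => z ⊆ x ∧ z.card + 1 = x.card),
      Finsupp.single z (1 : F))

/-- The flip map `σ(x) = Σ_{γ ∈ x} ((x \ γ) ∪ {γ̄})`. -/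
noncomputable def sigmaMap (F : Type*) [CommRing F] (n : ℕ) :
    (Finset (Fin n × Bool) →₀ F) →ₗ[F] (Finset (Fin n × Bool) →₀ F) :=
  Finsupp.lsum F fun x => LinearMap.toSpanSingleton F _
    (∑ γ ∈ x, Finsupp.single (insert (oppv γ) (x.erase γ)) (1 : F))

section Aux
variable {n : ℕ}

lemma oppv_oppv (p : Fin n × Bool) : oppv (oppv p) = p := by
  simp [oppv]

lemma oppv_ne (p : Fin n × Bool) : oppv p ≠ p := by
  simp [oppv, Prod.ext_iff]

lemma oppv_inj : Function.Injective (oppv (n := n)) := by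
  intro p q h
  rw [← oppv_oppv p, h, oppv_oppv]

lemma isFace_subset {x y : Finset (Fin n × Bool)} (h : IsFace y) (hxy : x ⊆ y) : IsFace x :=
  fun p hp q hq => h p (hxy hp) q (hxy hq)

lemma oppv_not_mem {x : Finset (Fin n × Bool)} (hx : IsFace x) {γ} (hγ : γ ∈ x) :
    oppv γ ∉ x := by
  intro h
  have := hx γ hγ (oppv γ) h rfl
  simp [oppv] at this

lemma isFace_insert {x : Finset (Fin n × Bool)} (hx : IsFace x) {v} (h1 : oppv v ∉ x) :
    IsFace (insert v x) := by
  intro p hp q hq hpq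
  rcases mem_insert.mp hp with rfl | hp' <;> rcases mem_insert.mp hq with rfl | hq'
  · rfl
  · by_contra hne
    exact h1 (by
      have h2 : q = oppv p := by
        rw [Prod.ext_iff]
        refine ⟨hpq.symm, ?_⟩
        show q.2 = !p.2
        cases hb : q.2 <;> cases hb2 : p.2 <;> simp_all
      rwa [← h2])
  · by_contra hne
    exact h1 (by
      have h2 : p = oppv q := by
        rw [Prod.ext_iff]
        refine ⟨hpq, ?_⟩
        show p.2 = !q.2
        cases hb : q.2 <;> cases hb2 : p.2 <;> simp_all
      exact h2 ▸ hp')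
  · exact hx p hp' q hq' hpq

lemma flip_card {x : Finset (Fin n × Bool)} (hx : IsFace x) {γ} (hγ : γ ∈ x) :
    (insert (oppv γ) (x.erase γ)).card = x.card := by
  rw [card_insert_of_notMem (fun h => oppv_not_mem hx hγ (mem_of_mem_erase h)),
    card_erase_of_mem hγ]
  have := card_pos.mpr ⟨γ, hγ⟩
  omega

lemma flip_face {x : Finset (Fin n × Bool)} (hx : IsFace x) {γ} (hγ : γ ∈ x) :
    IsFace (insert (oppv γ) (x.erase γ)) := by
  apply isFace_insert (isFace_subset hx (erase_subset _ _))
  rw [oppv_oppv]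
  exact notMem_erase _ _

lemma flip_ne {x : Finset (Fin n × Bool)} (hx : IsFace x) {γ} (hγ : γ ∈ x) :
    insert (oppv γ) (x.erase γ) ≠ x := by
  intro h
  exact oppv_not_mem hx hγ (h ▸ mem_insert_self _ _)

end Aux
section Aux2
variable {n : ℕ}

lemma countC {x : Finset (Fin n × Bool)} (hx : IsFace x) :
    x.filter (fun γ => insert (oppv γ) (x.erase γ) = x) = ∅ := by
  rw [Finset.filter_eq_empty_iff]
  exact fun γ hγ => flip_ne hx hγ

lemma countB {x : Finset (Fin n × Bool)} (hx : IsFace x) :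
    (univ.filter (fun z => (z ⊆ x ∧ z.card + 1 = x.card) ∧ IsFace x ∧ z ⊆ x ∧ x.card = z.card + 1)).card
      = x.card := by
  rcases Nat.eq_zero_or_pos x.card with h0 | h0
  · rw [h0]
    convert Finset.card_empty
    rw [Finset.filter_eq_empty_iff]
    rintro z - ⟨⟨-, h2⟩, -⟩
    omega
  · have : (univ.filter (fun z => (z ⊆ x ∧ z.card + 1 = x.card) ∧ IsFace x ∧ z ⊆ x ∧ x.card = z.card + 1))
        = x.powersetCard (x.card - 1) := by
      ext z
      simp only [mem_filter, mem_univ, true_and, mem_powersetCard]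
      constructor
      · rintro ⟨⟨h1, h2⟩, -⟩
        exact ⟨h1, by omega⟩
      · rintro ⟨h1, h2⟩
        exact ⟨⟨h1, by omega⟩, hx, h1, by omega⟩
    rw [this, card_powersetCard]
    rw [← Nat.choose_symm (by omega : x.card - 1 ≤ x.card)]
    have : x.card - (x.card - 1) = 1 := by omega
    rw [this, Nat.choose_one_right]

lemma countA {x : Finset (Fin n × Bool)} (hx : IsFace x) (hn : x.card ≤ n) :
    (univ.filter (fun y => (IsFace y ∧ x ⊆ y ∧ y.card = x.card + 1) ∧ x ⊆ y ∧ x.card + 1 = y.card)).card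
      = 2 * n - 2 * x.card := by
  have key : (univ.filter (fun y => (IsFace y ∧ x ⊆ y ∧ y.card = x.card + 1) ∧ x ⊆ y ∧ x.card + 1 = y.card))
      = (univ \ (x ∪ x.image oppv)).image (fun v => insert v x) := by
    ext y
    simp only [mem_filter, mem_univ, true_and, mem_image, mem_sdiff, mem_union, not_or]
    constructor
    · rintro ⟨⟨hf, hsub, hc⟩, -⟩
      have hd : (y \ x).card = 1 := by
        rw [card_sdiff_of_subset hsub]; omega
      obtain ⟨v, hv⟩ := Finset.card_eq_one.mp hd
      have hvy : v ∈ y := (mem_sdiff.mp (hv ▸ mem_singleton_self v)).1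
      have hvx : v ∉ x := (mem_sdiff.mp (hv ▸ mem_singleton_self v)).2
      refine ⟨v, ⟨⟨hvx, ?_⟩, ?_⟩⟩
      · intro hvim
        obtain ⟨u, hu, huv⟩ := hvim
        exact oppv_not_mem hf (hsub hu) (huv ▸ hvy)
      · rw [Finset.insert_eq, ← hv, union_comm, Finset.union_sdiff_of_subset hsub]
    · rintro ⟨v, ⟨⟨hvx, hvim⟩, rfl⟩⟩
      have hov : oppv v ∉ x := by
        intro h
        exact hvim ⟨oppv v, h, oppv_oppv v⟩
      have hc := card_insert_of_notMem hvx
      exact ⟨⟨isFace_insert hx hov, subset_insert _ _, hc⟩, subset_insert _ _, hc.symm⟩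
  rw [key, Finset.card_image_of_injOn, card_sdiff_of_subset (subset_univ _)]
  · rw [card_union_of_disjoint, Finset.card_image_of_injective _ oppv_inj]
    · simp only [card_univ, Fintype.card_prod, Fintype.card_fin, Fintype.card_bool]
      omega
    · rw [Finset.disjoint_left]
      intro a ha haim
      obtain ⟨u, hu, huv⟩ := Finset.mem_image.mp haim
      exact oppv_not_mem hx hu (huv ▸ ha)
  · intro u hu v hv h
    have h2 : insert u x = insert v x := h
    have hux : u ∉ x := fun hh => (mem_sdiff.mp hu).2 (mem_union_left _ hh)
    have : u ∈ insert v x := h2 ▸ mem_insert_self u x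
    rcases mem_insert.mp this with rfl | h'
    · rfl
    · exact absurd h' hux
end Aux2
section Aux3
variable {n : ℕ}

lemma self_not_mem_flip {x : Finset (Fin n × Bool)} (γ : Fin n × Bool) :
    γ ∉ insert (oppv γ) (x.erase γ) := by
  rw [mem_insert]
  rintro (h | h)
  · exact oppv_ne γ h.symm
  · exact notMem_erase _ _ h

lemma countD {x w : Finset (Fin n × Bool)} (hx : IsFace x) (hw : w ≠ x) :
    (univ.filter (fun y => (IsFace y ∧ x ⊆ y ∧ y.card = x.card + 1) ∧ w ⊆ y ∧ w.card + 1 = y.card)).card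
      + (x.filter (fun γ => insert (oppv γ) (x.erase γ) = w)).card
    = (univ.filter (fun z => (z ⊆ x ∧ z.card + 1 = x.card) ∧ IsFace w ∧ z ⊆ w ∧ w.card = z.card + 1)).card := by
  by_cases hcond : w.card = x.card ∧ (x ∪ w).card = x.card + 1
  · obtain ⟨hwc, hun⟩ := hcond
    have hic : (x ∩ w).card + 1 = x.card := by
      have := Finset.card_union_add_card_inter x w
      have h1 : x ⊆ x ∪ w := subset_union_left
      have h2 : x.card ≤ (x ∪ w).card := card_le_card h1
      omega
    have hsd : (x \ w).card = 1 := by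
      have := Finset.card_inter_add_card_sdiff x w
      omega
    obtain ⟨γ0, hγ0⟩ := Finset.card_eq_one.mp hsd
    have hγ0x : γ0 ∈ x := (mem_sdiff.mp (hγ0 ▸ mem_singleton_self γ0)).1
    have hγ0w : γ0 ∉ w := (mem_sdiff.mp (hγ0 ▸ mem_singleton_self γ0)).2
    have hxw_inter : x ∩ w = x.erase γ0 := by
      ext a
      simp only [mem_inter, mem_erase]
      constructor
      · rintro ⟨ha, haw⟩
        refine ⟨fun h => hγ0w (h ▸ haw), ha⟩
      · rintro ⟨hne, ha⟩
        refine ⟨ha, ?_⟩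
        by_contra haw
        have : a ∈ x \ w := mem_sdiff.mpr ⟨ha, haw⟩
        rw [hγ0] at this
        exact hne (mem_singleton.mp this)
    have hBeq : ∀ (hfw : IsFace w),
        (univ.filter (fun z => (z ⊆ x ∧ z.card + 1 = x.card) ∧ IsFace w ∧ z ⊆ w ∧ w.card = z.card + 1))
          = {x ∩ w} := by
      intro hfw
      ext z
      simp only [mem_filter, mem_univ, true_and, mem_singleton]
      constructor
      · rintro ⟨⟨hzx, hzc⟩, -, hzw, -⟩
        exact Finset.eq_of_subset_of_card_le (subset_inter hzx hzw) (by omega)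
          |>.symm ▸ rfl
      · rintro rfl
        exact ⟨⟨inter_subset_left, hic⟩, hfw, inter_subset_right, by omega⟩
    by_cases hfw : IsFace w
    · by_cases hfu : IsFace (x ∪ w)
      · -- A = {x∪w}, C = ∅, B = {x∩w}
        have hA : (univ.filter (fun y => (IsFace y ∧ x ⊆ y ∧ y.card = x.card + 1) ∧ w ⊆ y ∧ w.card + 1 = y.card))
            = {x ∪ w} := by
          ext y
          simp only [mem_filter, mem_univ, true_and, mem_singleton]
          constructor
          · rintro ⟨⟨hf, hxy, hyc⟩, hwy, -⟩
            exact (Finset.eq_of_subset_of_card_le (union_subset hxy hwy) (by omega)).symm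
          · rintro rfl
            exact ⟨⟨hfu, subset_union_left, hun⟩, subset_union_right, by omega⟩
        have hC : x.filter (fun γ => insert (oppv γ) (x.erase γ) = w) = ∅ := by
          rw [Finset.filter_eq_empty_iff]
          intro γ hγ hflip
          have h1 : oppv γ ∈ w := hflip ▸ mem_insert_self _ _
          exact oppv_not_mem hfu (mem_union_left _ hγ) (mem_union_right _ h1)
        rw [hA, hC, hBeq hfw]
        simp
      · -- A = ∅, C = {γ0}, B = {x∩w}
        have hwflip : w = insert (oppv γ0) (x.erase γ0) := by
          have key : oppv γ0 ∈ w := by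
            have hnf : ¬ IsFace (x ∪ w) := hfu
            unfold IsFace at hnf
            push_neg at hnf
            obtain ⟨p, hp, q, hq, h1, h2⟩ := hnf
            have helper : ∀ p q : Fin n × Bool, p ∈ x → q ∈ w → p.1 = q.1 → p.2 ≠ q.2 →
                oppv γ0 ∈ w := by
              intro p q hpx hqw h1 h2
              have hq_eq : q = oppv p := by
                rw [Prod.ext_iff]
                refine ⟨h1.symm, ?_⟩
                show q.2 = !p.2
                cases hb : q.2 <;> cases hb2 : p.2 <;> simp_all
              have hpw : p ∉ w := fun hpw => h2 (hfw p hpw q hqw h1)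
              have : p ∈ x \ w := mem_sdiff.mpr ⟨hpx, hpw⟩
              rw [hγ0, mem_singleton] at this
              subst this
              exact hq_eq ▸ hqw
            rcases mem_union.mp hp with hpx | hpw <;> rcases mem_union.mp hq with hqx | hqw
            · exact absurd (hx p hpx q hqx h1) h2
            · exact helper p q hpx hqw h1 h2
            · exact helper q p hqx hpw h1.symm (fun h => h2 h.symm)
            · exact absurd (hfw p hpw q hqw h1) h2
          have hsub : insert (oppv γ0) (x.erase γ0) ⊆ w := by
            rw [Finset.insert_subset_iff]
            exact ⟨key, hxw_inter ▸ inter_subset_right⟩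
          exact (Finset.eq_of_subset_of_card_le hsub (by rw [flip_card hx hγ0x]; omega)).symm
        have hA : (univ.filter (fun y => (IsFace y ∧ x ⊆ y ∧ y.card = x.card + 1) ∧ w ⊆ y ∧ w.card + 1 = y.card)) = ∅ := by
          rw [Finset.filter_eq_empty_iff]
          rintro y - ⟨⟨hf, hxy, -⟩, hwy, -⟩
          exact hfu (isFace_subset hf (union_subset hxy hwy))
        have hC : x.filter (fun γ => insert (oppv γ) (x.erase γ) = w) = {γ0} := by
          ext γ
          simp only [mem_filter, mem_singleton]
          constructor
          · rintro ⟨hγ, hflip⟩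
            have hγw : γ ∉ w := fun h => self_not_mem_flip γ (hflip ▸ h)
            have : γ ∈ x \ w := mem_sdiff.mpr ⟨hγ, hγw⟩
            rw [hγ0, mem_singleton] at this
            exact this
          · rintro rfl
            exact ⟨hγ0x, hwflip.symm⟩
        rw [hA, hC, hBeq hfw]
        simp
    · -- w not a face: all empty
      have hA : (univ.filter (fun y => (IsFace y ∧ x ⊆ y ∧ y.card = x.card + 1) ∧ w ⊆ y ∧ w.card + 1 = y.card)) = ∅ := by
        rw [Finset.filter_eq_empty_iff]
        rintro y - ⟨⟨hf, -, -⟩, hwy, -⟩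
        exact hfw (isFace_subset hf hwy)
      have hB : (univ.filter (fun z => (z ⊆ x ∧ z.card + 1 = x.card) ∧ IsFace w ∧ z ⊆ w ∧ w.card = z.card + 1)) = ∅ := by
        rw [Finset.filter_eq_empty_iff]
        rintro z - ⟨-, hfw', -, -⟩
        exact hfw hfw'
      have hC : x.filter (fun γ => insert (oppv γ) (x.erase γ) = w) = ∅ := by
        rw [Finset.filter_eq_empty_iff]
        intro γ hγ hflip
        exact hfw (hflip ▸ flip_face hx hγ)
      rw [hA, hB, hC]
      simp
  · -- degenerate case: all empty
    have hA : (univ.filter (fun y => (IsFace y ∧ x ⊆ y ∧ y.card = x.card + 1) ∧ w ⊆ y ∧ w.card + 1 = y.card)) = ∅ := by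
      rw [Finset.filter_eq_empty_iff]
      rintro y - ⟨⟨hf, hxy, hyc⟩, hwy, hwc⟩
      apply hcond
      constructor
      · omega
      · have hsub : x ∪ w ⊆ y := union_subset hxy hwy
        have h1 : (x ∪ w).card ≤ x.card + 1 := hyc ▸ card_le_card hsub
        have h2 : x.card ≤ (x ∪ w).card := card_le_card subset_union_left
        rcases Nat.lt_or_ge x.card (x ∪ w).card with h | h
        · omega
        · exfalso
          have hxu : x = x ∪ w := Finset.eq_of_subset_of_card_le subset_union_left h
          have hwx : w ⊆ x := hxu ▸ subset_union_right
          exact hw (Finset.eq_of_subset_of_card_le hwx (by omega))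
    have hB : (univ.filter (fun z => (z ⊆ x ∧ z.card + 1 = x.card) ∧ IsFace w ∧ z ⊆ w ∧ w.card = z.card + 1)) = ∅ := by
      rw [Finset.filter_eq_empty_iff]
      rintro z - ⟨⟨hzx, hzc⟩, -, hzw, hwc⟩
      apply hcond
      constructor
      · omega
      · have hsub : z ⊆ x ∩ w := subset_inter hzx hzw
        have h1 : z.card ≤ (x ∩ w).card := card_le_card hsub
        have h2 : (x ∩ w).card ≤ x.card := card_le_card inter_subset_left
        have h3 : (x ∩ w).card ≠ x.card := by
          intro h
          have hxw : x ⊆ w := by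
            have := Finset.eq_of_subset_of_card_le inter_subset_left (le_of_eq h.symm)
            exact this ▸ inter_subset_right
          exact hw (Finset.eq_of_subset_of_card_le hxw (by omega)).symm
        have := Finset.card_union_add_card_inter x w
        omega
    have hC : x.filter (fun γ => insert (oppv γ) (x.erase γ) = w) = ∅ := by
      rw [Finset.filter_eq_empty_iff]
      intro γ hγ hflip
      apply hcond
      constructor
      · rw [← hflip, flip_card hx hγ]
      · have hxu : x ∪ w = insert (oppv γ) x := by
          rw [← hflip, Finset.union_insert, Finset.union_eq_left.mpr (erase_subset _ _)]
        rw [hxu, card_insert_of_notMem (oppv_not_mem hx hγ)]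
    rw [hA, hB, hC]
    simp
end Aux3

theorem stmt_9 {F : Type*} [CommRing F] (n k : ℕ) (hk : k ≤ n)
    (x : Finset (Fin n × Bool)) (hx : IsFace x) (hcard : x.card = k) :
    bnd F n (eps F n (Finsupp.single x 1)) - eps F n (bnd F n (Finsupp.single x 1))
      = (2 * (n : F) - 3 * (k : F)) • Finsupp.single x 1
        - sigmaMap F n (Finsupp.single x 1) := by
  have eps_single : ∀ u : Finset (Fin n × Bool),
      eps F n (Finsupp.single u (1:F)) =
        ∑ y ∈ univ.filter (fun y => IsFace y ∧ u ⊆ y ∧ y.card = u.card + 1),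
          Finsupp.single y (1:F) := by
    intro u
    rw [eps, Finsupp.lsum_single, LinearMap.toSpanSingleton_apply, one_smul]
  have bnd_single : ∀ u : Finset (Fin n × Bool),
      bnd F n (Finsupp.single u (1:F)) =
        ∑ z ∈ univ.filter (fun z => z ⊆ u ∧ z.card + 1 = u.card),
          Finsupp.single z (1:F) := by
    intro u
    rw [bnd, Finsupp.lsum_single, LinearMap.toSpanSingleton_apply, one_smul]
  have sig_single :
      sigmaMap F n (Finsupp.single x (1:F)) =
        ∑ γ ∈ x, Finsupp.single (insert (oppv γ) (x.erase γ)) (1:F) := by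
    rw [sigmaMap, Finsupp.lsum_single, LinearMap.toSpanSingleton_apply, one_smul]
  rw [eps_single, bnd_single, map_sum, map_sum, sig_single]
  simp only [bnd_single, eps_single]
  ext w
  simp only [Finsupp.sub_apply, Finsupp.finset_sum_apply, Finsupp.smul_apply,
    Finsupp.single_apply, smul_eq_mul, Finset.sum_ite_eq', mem_filter, mem_univ, true_and,
    mul_ite, mul_one, mul_zero]
  rw [Finset.sum_boole, Finset.sum_boole, Finset.sum_boole, Finset.filter_filter,
    Finset.filter_filter]
  by_cases hwx : w = x
  · subst hwx
    rw [countA hx (hcard ▸ hk), countB hx, countC hx]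
    simp only [if_pos rfl, card_empty, Nat.cast_zero, sub_zero, hcard]
    rw [Nat.cast_sub (by omega)]
    push_cast
    ring
  · rw [if_neg (Ne.symm hwx)]
    have := countD hx hwx
    have : ((univ.filter (fun y => (IsFace y ∧ x ⊆ y ∧ y.card = x.card + 1) ∧ w ⊆ y ∧ w.card + 1 = y.card)).card : F)
        + (x.filter (fun γ => insert (oppv γ) (x.erase γ) = w)).card
      = ((univ.filter (fun z => (z ⊆ x ∧ z.card + 1 = x.card) ∧ IsFace w ∧ z ⊆ w ∧ w.card = z.card + 1)).card : F) := by
      exact_mod_cast congrArg (Nat.cast : ℕ → F) this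
    linear_combination this
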